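/- Fix α > 0 and set T = 2/(π·√(1+α²)). There exists a constant c > 0, depending only on α, such that for every positive integer k and every pair of functions u ∈ C²(ℝ,ℝ), θ ∈ C¹(ℝ,ℝ) satisfying u''(t) + k⁴π⁴·u(t) − α·k²π²·θ(t) = 0 and θ'(t) + α·k²π²·u'(t) = 0 for all t, one has ∫₀^T θ(t)² dt ≥ c·( k⁴π⁴·u(0)² + u'(0)² + θ(0)² ). -/

import Mathlib

open Real MeasureTheory

/-- Positive-definiteness of the averaged quadratic form, depending only on `α`. -/
lemma thermo_key_ineq (α x y z : ℝ) :
    2*(z+α*x)^2 + α^2*(x-α*z)^2 + α^2*(1+α^2)*y^2 ≥ α^2*(x^2+y^2+z^2) := by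
  nlinarith [sq_nonneg (2*α^2*x + (2*α - α^3)*z), sq_nonneg (α^2*z), sq_nonneg (α^3*z),
    sq_nonneg (α^2*y), sq_nonneg (α*y), sq_nonneg (z + α*x), sq_nonneg (α*(x - α*z))]

/-- Uniqueness for the harmonic oscillator with zero initial data. -/
lemma thermo_osc_zero {ω : ℝ} (hω : ω ≠ 0) {v w : ℝ → ℝ}
    (hv : ∀ t, HasDerivAt v (w t) t) (hw : ∀ t, HasDerivAt w (-ω^2 * v t) t)
    (h0 : v 0 = 0) (h0' : w 0 = 0) : ∀ t, v t = 0 := by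
  intro t
  have hd : ∀ s : ℝ, HasDerivAt (fun r => (w r)^2 + ω^2*(v r)^2) 0 s := by
    intro s
    have h1 := (hw s).fun_pow 2
    have h2 := ((hv s).fun_pow 2).const_mul (ω^2)
    have h3 := h1.add h2
    refine h3.congr_deriv ?_
    push_cast
    ring
  have hconst := is_const_of_deriv_eq_zero (f := fun r => (w r)^2 + ω^2*(v r)^2)
    (fun s => (hd s).differentiableAt) (fun s => (hd s).deriv) t 0
  change (w t)^2 + ω^2*(v t)^2 = (w 0)^2 + ω^2*(v 0)^2 at hconst
  rw [h0, h0'] at hconst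
  have hω2 : 0 < ω^2 := by positivity
  have h4 : ω^2*(v t)^2 ≤ 0 := by nlinarith [sq_nonneg (w t)]
  have h5 : (v t)^2 = 0 := by nlinarith [sq_nonneg (v t)]
  exact pow_eq_zero_iff two_ne_zero |>.mp h5

set_option maxHeartbeats 1000000

/-- Fourier-mode observability estimate for the conservative thermoelastic beam system:
if `u'' + k⁴π⁴ u − α k²π² θ = 0` and `θ' + α k²π² u' = 0`, then with
`T = 2/(π√(1+α²))`, `∫₀ᵀ θ² ≥ c (k⁴π⁴ u(0)² + u'(0)² + θ(0)²)` with `c > 0`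
depending only on `α`. -/
theorem thermoelastic_mode_observability (α : ℝ) (hα : 0 < α)
    (T : ℝ) (hT : T = 2 / (π * Real.sqrt (1 + α ^ 2))) :
    ∃ c > (0:ℝ), ∀ (k : ℕ), 1 ≤ k → ∀ (u θ : ℝ → ℝ),
      ContDiff ℝ 2 u → ContDiff ℝ 1 θ →
      (∀ t : ℝ, iteratedDeriv 2 u t + (k : ℝ) ^ 4 * π ^ 4 * u t
          - α * (k : ℝ) ^ 2 * π ^ 2 * θ t = 0) →
      (∀ t : ℝ, deriv θ t + α * (k : ℝ) ^ 2 * π ^ 2 * deriv u t = 0) →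
      (∫ t in (0:ℝ)..T, (θ t) ^ 2)
        ≥ c * ((k : ℝ) ^ 4 * π ^ 4 * (u 0) ^ 2 + (deriv u 0) ^ 2 + (θ 0) ^ 2) := by
  obtain ⟨s, hs_def⟩ : ∃ s : ℝ, s = Real.sqrt (1 + α ^ 2) := ⟨_, rfl⟩
  have hs : 0 < s := hs_def ▸ Real.sqrt_pos.mpr (by positivity)
  have hs2 : s ^ 2 = 1 + α ^ 2 := hs_def ▸ Real.sq_sqrt (by positivity)
  rw [← hs_def] at hT
  have hT0 : 0 < T := by rw [hT]; positivity
  refine ⟨T * α^2 / (2 * (1 + α^2)^2), by positivity, ?_⟩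
  intro k hk u θ hu hθc ode1 ode2
  have hkR : (1:ℝ) ≤ (k:ℝ) := by exact_mod_cast hk
  obtain ⟨K, hK_def⟩ : ∃ K : ℝ, K = (k:ℝ)^2 * π^2 := ⟨_, rfl⟩
  have hKpos : 0 < K := by
    have : (0:ℝ) < (k:ℝ) := by linarith
    rw [hK_def]; positivity
  obtain ⟨ω, hω_def⟩ : ∃ ω : ℝ, ω = K * s := ⟨_, rfl⟩
  have hωpos : 0 < ω := hω_def ▸ mul_pos hKpos hs
  have hω2 : ω^2 = K^2 * (1 + α^2) := by rw [hω_def, mul_pow, hs2]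
  -- differentiability
  rw [show (2 : WithTop ℕ∞) = 1 + 1 by norm_num, contDiff_succ_iff_deriv] at hu
  have hud : Differentiable ℝ u := hu.1
  have hud2 : Differentiable ℝ (deriv u) := hu.2.2.differentiable one_ne_zero
  have hθd : Differentiable ℝ θ := hθc.differentiable one_ne_zero
  -- Step 1 : θ t + α K u t is constant
  have hθu : ∀ t, θ t = θ 0 + α * K * u 0 - α * K * u t := by
    have hder : ∀ t, HasDerivAt (fun r => θ r + α * K * u r)
        (deriv θ t + α * K * deriv u t) t :=
      fun t => (hθd t).hasDerivAt.add (((hud t).hasDerivAt).const_mul (α*K))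
    have hzero : ∀ t, deriv (fun r => θ r + α * K * u r) t = 0 := by
      intro t
      rw [(hder t).deriv, hK_def]
      linarith [ode2 t]
    have hconst := is_const_of_deriv_eq_zero (𝕜 := ℝ)
      (f := fun r => θ r + α * K * u r)
      (fun t => (hder t).differentiableAt) hzero
    intro t
    have h := hconst t 0
    change θ t + α * K * u t = θ 0 + α * K * u 0 at h
    linarith
  -- constants of the explicit solution
  obtain ⟨C, hC_def⟩ : ∃ C : ℝ, C = (α * θ 0 + α^2 * K * u 0) / (K * (1 + α^2)) := ⟨_, rfl⟩
  obtain ⟨A, hA_def⟩ : ∃ A : ℝ, A = u 0 - C := ⟨_, rfl⟩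
  obtain ⟨B, hB_def⟩ : ∃ B : ℝ, B = deriv u 0 / ω := ⟨_, rfl⟩
  obtain ⟨D, hD_def⟩ : ∃ D : ℝ, D = (θ 0 + α * K * u 0) / (1 + α^2) := ⟨_, rfl⟩
  obtain ⟨P, hP_def⟩ : ∃ P : ℝ, P = α * K * A := ⟨_, rfl⟩
  obtain ⟨Q, hQ_def⟩ : ∃ Q : ℝ, Q = α * K * B := ⟨_, rfl⟩
  have hC : K * (1 + α^2) * C = α * θ 0 + α^2 * K * u 0 := by
    rw [hC_def]; field_simp
  -- trig derivative tooling
  have hlin : ∀ t : ℝ, HasDerivAt (fun r : ℝ => ω * r) ω t := by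
    intro t; simpa using (hasDerivAt_id t).const_mul ω
  have hcos : ∀ t : ℝ, HasDerivAt (fun r : ℝ => Real.cos (ω*r)) (-Real.sin (ω*t) * ω) t :=
    fun t => (hlin t).cos
  have hsin : ∀ t : ℝ, HasDerivAt (fun r : ℝ => Real.sin (ω*r)) (Real.cos (ω*t) * ω) t :=
    fun t => (hlin t).sin
  -- Step 2 : u t = A cos ω t + B sin ω t + C
  have huexp : ∀ t, u t = A * Real.cos (ω*t) + B * Real.sin (ω*t) + C := by
    have hvz := thermo_osc_zero (ω := ω) (ne_of_gt hωpos)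
      (v := fun t => u t - A * Real.cos (ω*t) - B * Real.sin (ω*t) - C)
      (w := fun t => deriv u t + A * ω * Real.sin (ω*t) - B * ω * Real.cos (ω*t))
      ?_ ?_ ?_ ?_
    · intro t
      have h := hvz t
      change u t - A * Real.cos (ω*t) - B * Real.sin (ω*t) - C = 0 at h
      linarith
    · intro t
      show HasDerivAt (fun r => u r - A * Real.cos (ω*r) - B * Real.sin (ω*r) - C)
        (deriv u t + A * ω * Real.sin (ω*t) - B * ω * Real.cos (ω*t)) t
      have h1 := (((hud t).hasDerivAt.sub ((hcos t).const_mul A)).sub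
        ((hsin t).const_mul B)).sub_const C
      refine h1.congr_deriv ?_
      ring
    · intro t
      show HasDerivAt (fun r => deriv u r + A * ω * Real.sin (ω*r) - B * ω * Real.cos (ω*r))
        (-ω^2 * (u t - A * Real.cos (ω*t) - B * Real.sin (ω*t) - C)) t
      have hdd : HasDerivAt (deriv u) (deriv (deriv u) t) t := (hud2 t).hasDerivAt
      have h1 := (hdd.add ((hsin t).const_mul (A*ω))).sub ((hcos t).const_mul (B*ω))
      have h2 : deriv (deriv u) t = α * K * θ t - K^2 * u t := by
        have hiter : iteratedDeriv 2 u t = deriv (deriv u) t := by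
          rw [show (2:ℕ) = 1 + 1 from rfl, iteratedDeriv_succ, iteratedDeriv_one]
        have h := ode1 t
        rw [hiter] at h
        rw [hK_def]
        nlinarith [h]
      refine h1.congr_deriv ?_
      symm
      rw [h2, hθu t]
      linear_combination (C - u t) * hω2 + K * hC
    · show u 0 - A * Real.cos (ω*0) - B * Real.sin (ω*0) - C = 0
      rw [mul_zero, Real.cos_zero, Real.sin_zero, hA_def]; ring
    · show deriv u 0 + A * ω * Real.sin (ω*0) - B * ω * Real.cos (ω*0) = 0
      rw [mul_zero, Real.cos_zero, Real.sin_zero, hB_def]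
      field_simp
      ring
  -- Step 3 : explicit formula for θ
  have hθexp : ∀ t, θ t = D - P * Real.cos (ω*t) - Q * Real.sin (ω*t) := by
    intro t
    have hDalt : θ 0 + α * K * u 0 - α * K * C = D := by
      rw [hD_def, hC_def]
      field_simp
      ring
    rw [hθu t, huexp t, hP_def, hQ_def]
    linarith [hDalt]
  -- Step 4 : the antiderivative of θ²
  obtain ⟨a1, ha1_def⟩ : ∃ a : ℝ, a = 2*D*P/ω := ⟨_, rfl⟩
  obtain ⟨a2, ha2_def⟩ : ∃ a : ℝ, a = 2*D*Q/ω := ⟨_, rfl⟩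
  obtain ⟨a3, ha3_def⟩ : ∃ a : ℝ, a = (P^2-Q^2)/(2*ω) := ⟨_, rfl⟩
  obtain ⟨a4, ha4_def⟩ : ∃ a : ℝ, a = P*Q/ω := ⟨_, rfl⟩
  have ha1 : a1 * ω = 2*D*P := by rw [ha1_def]; field_simp
  have ha2 : a2 * ω = 2*D*Q := by rw [ha2_def]; field_simp
  have ha3 : a3 * (2*ω) = P^2 - Q^2 := by rw [ha3_def]; field_simp
  have ha4 : a4 * ω = P*Q := by rw [ha4_def]; field_simp
  obtain ⟨G, hG_def⟩ : ∃ G : ℝ → ℝ, G = fun t => D^2*t + ((P^2+Q^2)/2)*t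
      - a1*Real.sin (ω*t) + a2*Real.cos (ω*t) + a3*(Real.sin (ω*t)*Real.cos (ω*t))
      + a4*(Real.sin (ω*t))^2 := ⟨_, rfl⟩
  have hG : ∀ t ∈ Set.uIcc (0:ℝ) T,
      HasDerivAt G ((D - P*Real.cos (ω*t) - Q*Real.sin (ω*t))^2) t := by
    intro t _
    rw [hG_def]
    have h1 : HasDerivAt (fun r : ℝ => D^2*r) (D^2) t := by
      simpa using (hasDerivAt_id t).const_mul (D^2)
    have h2 : HasDerivAt (fun r : ℝ => ((P^2+Q^2)/2)*r) ((P^2+Q^2)/2) t := by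
      simpa using (hasDerivAt_id t).const_mul ((P^2+Q^2)/2)
    have h3 := (hsin t).const_mul a1
    have h4 := (hcos t).const_mul a2
    have h5 := ((hsin t).mul (hcos t)).const_mul a3
    have h6 := ((hsin t).pow 2).const_mul a4
    have htot := ((((h1.add h2).sub h3).add h4).add h5).add h6
    refine htot.congr_deriv ?_
    symm
    have pyth : Real.sin (ω*t)^2 + Real.cos (ω*t)^2 = 1 := Real.sin_sq_add_cos_sq _
    push_cast
    linear_combination Real.cos (ω*t) * ha1 + Real.sin (ω*t) * ha2
      - ((Real.cos (ω*t)^2 - Real.sin (ω*t)^2)/2) * ha3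
      - (2*Real.sin (ω*t)*Real.cos (ω*t)) * ha4 + ((P^2+Q^2)/2) * pyth
  have hint1 : (∫ t in (0:ℝ)..T, (θ t)^2)
      = ∫ t in (0:ℝ)..T, (D - P*Real.cos (ω*t) - Q*Real.sin (ω*t))^2 :=
    intervalIntegral.integral_congr (fun t _ => by rw [hθexp t])
  have hint2 : (∫ t in (0:ℝ)..T, (D - P*Real.cos (ω*t) - Q*Real.sin (ω*t))^2)
      = G T - G 0 :=
    intervalIntegral.integral_eq_sub_of_hasDerivAt hG
      (Continuous.intervalIntegrable (by fun_prop) 0 T)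
  -- Step 5 : evaluate
  have hωT : ω*T = (2*(k:ℝ)^2)*π := by
    rw [hω_def, hK_def, hT]
    field_simp
  have hsinT : Real.sin (ω*T) = 0 := by
    rw [hωT, show (2*(k:ℝ)^2)*π = ((2*k^2 : ℕ):ℝ)*π by push_cast; ring]
    exact Real.sin_nat_mul_pi _
  have hcosT : Real.cos (ω*T) = 1 := by
    rw [hωT, show (2*(k:ℝ)^2)*π = ((k^2 : ℕ):ℝ)*(2*π) by push_cast; ring]
    exact Real.cos_nat_mul_two_pi _
  have hGT : G T - G 0 = T*(D^2 + (P^2+Q^2)/2) := by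
    rw [hG_def]
    simp only [mul_zero, Real.sin_zero, Real.cos_zero, hsinT, hcosT]
    ring
  rw [hint1, hint2, hGT]
  -- Step 6 : final algebraic inequality
  have hP' : P = α*(K*u 0 - α*θ 0)/(1+α^2) := by
    rw [hP_def, hA_def, hC_def]
    field_simp
    ring
  have hQ' : Q = α*(deriv u 0)/s := by
    rw [hQ_def, hB_def, hω_def]
    field_simp
  have hQ2 : Q^2 = α^2*(deriv u 0)^2/(1+α^2) := by
    rw [hQ', div_pow, hs2, mul_pow]
  rw [show (k:ℝ)^4*π^4 = K^2 by rw [hK_def]; ring, ge_iff_le, ← sub_nonneg]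
  have expand : T*(D^2+(P^2+Q^2)/2)
      - T*α^2/(2*(1+α^2)^2)*(K^2*(u 0)^2 + (deriv u 0)^2 + (θ 0)^2)
      = (T/(2*(1+α^2)^2)) * (2*(θ 0 + α*(K*u 0))^2 + α^2*((K*u 0) - α*θ 0)^2
        + α^2*(1+α^2)*(deriv u 0)^2 - α^2*((K*u 0)^2 + (deriv u 0)^2 + (θ 0)^2)) := by
    rw [hD_def, hP', hQ2]
    field_simp
    ring
  rw [expand]
  exact mul_nonneg (by positivity)
    (by linarith [thermo_key_ineq α (K*u 0) (deriv u 0) (θ 0)])
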